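/- With the definitions below, m_tI > 0, Δv_sc(j) = 0 for all j = 1,…,n+1, and Σ_{j=1}^{n+1} Δv_sn(j) > 0, the inequality m_sIc ≤ m_sIn holds if and only if m_sF/m_tI ≥ α_AD, where α_AD := [Σ_{j=1}^{n} {(m_req/m_tI)·exp((Σ_{k=1}^{j} Δv_sn(k))/(Isp_s·g0)) − ((1 + m_req/m_tI)·exp(Δv_tout(j)/(Isp_t·g0)) − exp(−Δv_tin(j)/(Isp_t·g0)))}] / [1 − exp((Σ_{j=1}^{n+1} Δv_sn(j))/(Isp_s·g0))]. -/
import Mathlib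


/-- Fully cooperative "depot" Architecture D (the servicer does not maneuver, `Δv_sc ≡ 0`):
the cooperative architecture needs no more initial servicer mass than the non-cooperative
Architecture A exactly when the dry-servicer to initial-target mass ratio is at least the
critical mass ratio `α_AD`. -/
theorem stmt_9 (n : ℕ) (hn : 1 ≤ n)
    (g0 Isp_s Isp_t m_sF m_tI m_req : ℝ)
    (hg0 : 0 < g0) (hIsps : 0 < Isp_s) (hIspt : 0 < Isp_t) (htI : 0 < m_tI)
    (Δv_sn Δv_sc Δv_tin Δv_tout : ℕ → ℝ)
    (hzero : ∀ j : ℕ, 1 ≤ j → j ≤ n + 1 → Δv_sc j = 0)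
    (hpos : 0 < ∑ j ∈ Finset.Icc 1 (n + 1), Δv_sn j)
    (m_sIn m_sIc α_AD : ℝ)
    (hIn : m_sIn = m_sF *
        Real.exp ((∑ j ∈ Finset.Icc 1 (n + 1), Δv_sn j) / (Isp_s * g0)) +
      ∑ j ∈ Finset.Icc 1 n,
        m_req * Real.exp ((∑ k ∈ Finset.Icc 1 j, Δv_sn k) / (Isp_s * g0)))
    (hIc : m_sIc = m_sF *
        Real.exp ((∑ j ∈ Finset.Icc 1 (n + 1), Δv_sc j) / (Isp_s * g0)) +
      ∑ j ∈ Finset.Icc 1 n,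
        ((m_tI + m_req) * Real.exp (Δv_tout j / (Isp_t * g0)) -
          m_tI * Real.exp (-Δv_tin j / (Isp_t * g0))) *
          Real.exp ((∑ k ∈ Finset.Icc 1 j, Δv_sc k) / (Isp_s * g0)))
    (hα : α_AD =
      (∑ j ∈ Finset.Icc 1 n,
        ((m_req / m_tI) *
            Real.exp ((∑ k ∈ Finset.Icc 1 j, Δv_sn k) / (Isp_s * g0)) -
          ((1 + m_req / m_tI) * Real.exp (Δv_tout j / (Isp_t * g0)) -
              Real.exp (-Δv_tin j / (Isp_t * g0))))) /
      (1 - Real.exp ((∑ j ∈ Finset.Icc 1 (n + 1), Δv_sn j) / (Isp_s * g0)))) :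
    m_sIc ≤ m_sIn ↔ α_AD ≤ m_sF / m_tI := by
  set E : ℝ := Real.exp ((∑ j ∈ Finset.Icc 1 (n + 1), Δv_sn j) / (Isp_s * g0)) with hE
  have hE1 : 1 < E := by
    rw [hE]
    have : 0 < (∑ j ∈ Finset.Icc 1 (n + 1), Δv_sn j) / (Isp_s * g0) := by positivity
    calc (1:ℝ) = Real.exp 0 := by rw [Real.exp_zero]
    _ < _ := Real.exp_lt_exp.mpr this
  set A : ℝ := ∑ j ∈ Finset.Icc 1 n,
      ((m_tI + m_req) * Real.exp (Δv_tout j / (Isp_t * g0)) -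
        m_tI * Real.exp (-Δv_tin j / (Isp_t * g0))) with hA
  set B : ℝ := ∑ j ∈ Finset.Icc 1 n,
      m_req * Real.exp ((∑ k ∈ Finset.Icc 1 j, Δv_sn k) / (Isp_s * g0)) with hB
  have hsc : ∑ j ∈ Finset.Icc 1 (n + 1), Δv_sc j = 0 :=
    Finset.sum_eq_zero fun j hj =>
      hzero j (Finset.mem_Icc.mp hj).1 (Finset.mem_Icc.mp hj).2
  have hIc' : m_sIc = m_sF + A := by
    rw [hIc, hsc, hA]
    rw [zero_div, Real.exp_zero, mul_one]
    congr 1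
    apply Finset.sum_congr rfl
    intro j hj
    have hjn := Finset.mem_Icc.mp hj
    have : ∑ k ∈ Finset.Icc 1 j, Δv_sc k = 0 :=
      Finset.sum_eq_zero fun k hk =>
        hzero k (Finset.mem_Icc.mp hk).1
          (le_trans (le_trans (Finset.mem_Icc.mp hk).2 hjn.2) (Nat.le_succ n))
    rw [this, zero_div, Real.exp_zero, mul_one]
  have hIn' : m_sIn = m_sF * E + B := hIn
  have htI' : m_tI ≠ 0 := ne_of_gt htI
  have h1 : m_tI * (1 - E) ≠ 0 := mul_ne_zero htI' (by nlinarith)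
  have h2 : m_tI * (E - 1) ≠ 0 := mul_ne_zero htI' (by nlinarith)
  have hα' : α_AD = (A - B) / (m_tI * (E - 1)) := by
    rw [hα]
    have hnum : (∑ j ∈ Finset.Icc 1 n,
        ((m_req / m_tI) *
            Real.exp ((∑ k ∈ Finset.Icc 1 j, Δv_sn k) / (Isp_s * g0)) -
          ((1 + m_req / m_tI) * Real.exp (Δv_tout j / (Isp_t * g0)) -
              Real.exp (-Δv_tin j / (Isp_t * g0))))) = (B - A) / m_tI := by
      rw [hB, hA, ← Finset.sum_sub_distrib, Finset.sum_div]
      apply Finset.sum_congr rfl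
      intro j hj
      field_simp
      try ring
    rw [hnum, div_div]
    rw [div_eq_div_iff h1 h2]
    ring
  rw [hIc', hIn', hα']
  have hden : 0 < m_tI * (E - 1) := by nlinarith
  rw [div_le_div_iff₀ hden htI]
  constructor
  · intro h; nlinarith
  · intro h; nlinarith
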